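/- arXiv:1207.6603 — 5 statements merged into one kernel-verified Lean document; each statement's English description precedes it below -/
import Mathlib

section
/- Let n ≥ 1 and let c : Fin n → ℝ be nondecreasing (c j ≤ c k whenever j ≤ k). Let m, n' : Fin n → ℝ be strictly positive with ∑ j, m j = 1 and ∑ j, n' j = 1. If for every j with j+1 < n one has m j / m (j+1) ≤ n' j / n' (j+1), then ∑ j, c j * n' j ≤ ∑ j, c j * m j. -/
/-- Reservation-price lemma (Section V-B): if channels are sorted by nondecreasing
per-service cost `c`, `m` and `n'` are strictly positive probability vectors, and the
consecutive likelihood-ratio condition `m j / m (j+1) ≤ n' j / n' (j+1)` holds, then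
the estimated average cost `∑ c j * m j` dominates the true average cost `∑ c j * n' j`. -/
theorem reservation_price_lemma (n : ℕ) (hn : 1 ≤ n)
    (c m n' : Fin n → ℝ)
    (hc : ∀ j k : Fin n, j ≤ k → c j ≤ c k)
    (hm_pos : ∀ j, 0 < m j) (hn'_pos : ∀ j, 0 < n' j)
    (hm_sum : ∑ j, m j = 1) (hn'_sum : ∑ j, n' j = 1)
    (hratio : ∀ j : Fin n, ∀ h : (j : ℕ) + 1 < n,
      m j / m ⟨(j : ℕ) + 1, h⟩ ≤ n' j / n' ⟨(j : ℕ) + 1, h⟩) :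
    ∑ j, c j * n' j ≤ ∑ j, c j * m j := by
  set r : Fin n → ℝ := fun j => n' j / m j with hr
  -- one-step monotonicity
  have step : ∀ (j : Fin n) (h : (j : ℕ) + 1 < n), r ⟨(j : ℕ) + 1, h⟩ ≤ r j := by
    intro j h
    have hrat := hratio j h
    have hm1 := hm_pos ⟨(j : ℕ) + 1, h⟩
    have hn1 := hn'_pos ⟨(j : ℕ) + 1, h⟩
    rw [div_le_div_iff₀ hm1 hn1] at hrat
    simp only [hr]
    rw [div_le_div_iff₀ hm1 (hm_pos j)]
    nlinarith
  -- r is antitone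
  have hmono : ∀ (d : ℕ) (j : Fin n) (h : (j : ℕ) + d < n), r ⟨(j : ℕ) + d, h⟩ ≤ r j := by
    intro d
    induction d with
    | zero => intro j h; simp
    | succ d ih =>
      intro j h
      have h' : (j : ℕ) + d < n := by omega
      have h2 : ((⟨(j : ℕ) + d, h'⟩ : Fin n) : ℕ) + 1 < n := by show (j : ℕ) + d + 1 < n; omega
      have hs := step ⟨(j : ℕ) + d, h'⟩ h2
      have heq : (⟨((⟨(j : ℕ) + d, h'⟩ : Fin n) : ℕ) + 1, h2⟩ : Fin n)
          = ⟨(j : ℕ) + (d + 1), h⟩ := by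
        ext; simp [Nat.add_assoc]
      rw [heq] at hs
      exact hs.trans (ih j h')
  have hanti : ∀ j k : Fin n, j ≤ k → r k ≤ r j := by
    intro j k hjk
    have hjk' : (j : ℕ) ≤ (k : ℕ) := hjk
    have hkn : (j : ℕ) + ((k : ℕ) - (j : ℕ)) < n := by omega
    have heq : (⟨(j : ℕ) + ((k : ℕ) - (j : ℕ)), hkn⟩ : Fin n) = k := by
      ext; simp; omega
    have := hmono ((k : ℕ) - (j : ℕ)) j hkn
    rwa [heq] at this
  have key : ∀ j k : Fin n, (c j - c k) * (r j - r k) ≤ 0 := by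
    intro j k
    rcases le_total j k with h | h
    · have h1 : c j - c k ≤ 0 := by linarith [hc j k h]
      have h2 : 0 ≤ r j - r k := by linarith [hanti j k h]
      exact mul_nonpos_of_nonpos_of_nonneg h1 h2
    · have h1 : 0 ≤ c j - c k := by linarith [hc k j h]
      have h2 : r j - r k ≤ 0 := by linarith [hanti k j h]
      exact mul_nonpos_of_nonneg_of_nonpos h1 h2
  have hn'eq : ∀ j, n' j = m j * r j := by
    intro j
    simp only [hr]
    rw [mul_comm, div_mul_cancel₀ _ (hm_pos j).ne']
  have hsum_r : ∑ j, m j * r j = 1 := by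
    rw [← hn'_sum]; exact Finset.sum_congr rfl fun j _ => (hn'eq j).symm
  -- double sum inequality
  have S_nonpos : ∑ j : Fin n, ∑ k : Fin n, m j * m k * ((c j - c k) * (r j - r k)) ≤ 0 := by
    apply Finset.sum_nonpos
    intro j _
    apply Finset.sum_nonpos
    intro k _
    exact mul_nonpos_of_nonneg_of_nonpos
      (mul_nonneg (hm_pos j).le (hm_pos k).le) (key j k)
  -- expand the double sum
  have expand : ∑ j : Fin n, ∑ k : Fin n, m j * m k * ((c j - c k) * (r j - r k)) =
      2 * (∑ j, c j * n' j) - 2 * (∑ j, c j * m j) := by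
    have : ∀ j : Fin n, ∑ k : Fin n, m j * m k * ((c j - c k) * (r j - r k)) =
        (m j * (c j * r j)) * (∑ k, m k) - (m j * c j) * (∑ k, m k * r k)
          - (m j * r j) * (∑ k, m k * c k) + m j * (∑ k, m k * (c k * r k)) := by
      intro j
      rw [Finset.mul_sum, Finset.mul_sum, Finset.mul_sum, Finset.mul_sum]
      rw [← Finset.sum_sub_distrib, ← Finset.sum_sub_distrib, ← Finset.sum_add_distrib]
      exact Finset.sum_congr rfl fun k _ => by ring
    rw [Finset.sum_congr rfl fun j _ => this j]
    rw [hm_sum, hsum_r]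
    have e1 : ∑ k : Fin n, m k * c k = ∑ j, c j * m j :=
      Finset.sum_congr rfl fun k _ => by ring
    have e2 : ∑ k : Fin n, m k * (c k * r k) = ∑ j, c j * n' j :=
      Finset.sum_congr rfl fun k _ => by rw [hn'eq k]; ring
    rw [e1, e2]
    rw [Finset.sum_add_distrib, Finset.sum_sub_distrib, Finset.sum_sub_distrib]
    rw [← Finset.sum_mul, ← Finset.sum_mul, ← Finset.sum_mul, ← Finset.sum_mul,
      hm_sum, hsum_r]
    have e3 : ∑ j : Fin n, m j * (c j * r j) = ∑ j, c j * n' j :=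
      Finset.sum_congr rfl fun j _ => by rw [hn'eq j]; ring
    have e4 : ∑ j : Fin n, m j * c j = ∑ j, c j * m j :=
      Finset.sum_congr rfl fun j _ => by ring
    rw [e3, e4]
    ring
  rw [expand] at S_nonpos
  linarith
end

section
/- Let α be a type, A B : Finset α, and w : α → ℝ with w x ≥ 0 for every x ∈ A ∪ B. Suppose there exists an injective map φ from the elements of A \ B into the elements of B such that w a ≤ w (φ a) for every a ∈ A \ B. Then ∑_{a ∈ A} w a ≤ 2 · ∑_{b ∈ B} w b. -/
/-- Charging argument in Proposition 3: if every element of `A \ B` can be injectively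
charged to an element of `B` of at least equal (nonnegative) weight, then the total
weight of `A` is at most twice that of `B`. -/
theorem charging_argument {α : Type*} [DecidableEq α]
    (A B : Finset α) (w : α → ℝ)
    (hw : ∀ x ∈ A ∪ B, 0 ≤ w x)
    (φ : α → α)
    (hmap : ∀ a ∈ A \ B, φ a ∈ B)
    (hinj : ∀ a ∈ A \ B, ∀ a' ∈ A \ B, φ a = φ a' → a = a')
    (hle : ∀ a ∈ A \ B, w a ≤ w (φ a)) :
    ∑ a ∈ A, w a ≤ 2 * ∑ b ∈ B, w b := by
  have h1 : ∑ a ∈ A \ B, w a ≤ ∑ b ∈ B, w b := by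
    calc ∑ a ∈ A \ B, w a ≤ ∑ a ∈ A \ B, w (φ a) := Finset.sum_le_sum hle
      _ = ∑ b ∈ (A \ B).image φ, w b := by
          rw [Finset.sum_image]; exact hinj
      _ ≤ ∑ b ∈ B, w b := by
          apply Finset.sum_le_sum_of_subset_of_nonneg
          · intro b hb
            obtain ⟨a, ha, rfl⟩ := Finset.mem_image.mp hb
            exact hmap a ha
          · intro x hx _
            exact hw x (Finset.mem_union_right _ hx)
  have h2 : ∑ a ∈ A ∩ B, w a ≤ ∑ b ∈ B, w b := by
    apply Finset.sum_le_sum_of_subset_of_nonneg (Finset.inter_subset_right)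
    intro x hx _
    exact hw x (Finset.mem_union_right _ hx)
  rw [← Finset.sum_inter_add_sum_sdiff A B w]
  linarith
end

section
/- Consider a finite set R of requests with arrival times a : R → ℕ, deadlines d : R → ℕ satisfying a i ≤ d i, nonnegative valuations w : R → ℝ, and per-slot channel capacities c : ℕ → ℕ. Call σ : R → Option ℕ a feasible schedule if (i) σ i = some t implies a i ≤ t ≤ d i, and (ii) for every slot t, the number of requests i with σ i = some t is at most c t. Call a feasible schedule g greedy if for every request i with g i = none and every slot t with a i ≤ t ≤ d i, the number of requests j with g j = some t equals c t and every such j satisfies w j ≥ w i. Then for any feasible schedule σ and any greedy schedule g, ∑_{i : σ i ≠ none} w i ≤ 2 · ∑_{j : g j ≠ none} w j. -/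
lemma sum_le_sum_of_card_le' {R : Type*} (w : R → ℝ) (hw : ∀ i, 0 ≤ w i)
    (A B : Finset R) (hcard : A.card ≤ B.card)
    (hle : ∀ i ∈ A, ∀ j ∈ B, w i ≤ w j) : ∑ i ∈ A, w i ≤ ∑ j ∈ B, w j := by
  rcases A.eq_empty_or_nonempty with h | hA
  · simpa [h] using Finset.sum_nonneg (fun j _ => hw j)
  · have hB : B.Nonempty := Finset.card_pos.mp
      (lt_of_lt_of_le (Finset.card_pos.mpr hA) hcard)
    obtain ⟨j₀, hj₀, hmin⟩ := B.exists_min_image w hB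
    calc ∑ i ∈ A, w i ≤ ∑ _i ∈ A, w j₀ :=
          Finset.sum_le_sum (fun i hi => hle i hi j₀ hj₀)
      _ = A.card • w j₀ := by rw [Finset.sum_const]
      _ ≤ B.card • w j₀ := nsmul_le_nsmul_left (hw j₀) hcard
      _ ≤ ∑ j ∈ B, w j := Finset.card_nsmul_le_sum B w (w j₀) (fun j hj => hmin j hj)

/-- Deterministic sample-path version of Proposition 3 (1/2-competitiveness of greedy):
any feasible schedule obtains at most twice the total valuation of a greedy schedule. -/
theorem greedy_half_competitive {R : Type*} [Fintype R] [DecidableEq R]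
    (a d : R → ℕ) (had : ∀ i, a i ≤ d i)
    (w : R → ℝ) (hw : ∀ i, 0 ≤ w i)
    (c : ℕ → ℕ) (σ g : R → Option ℕ)
    -- σ is feasible
    (hσ_win : ∀ i t, σ i = some t → a i ≤ t ∧ t ≤ d i)
    (hσ_cap : ∀ t, (Finset.univ.filter (fun i => σ i = some t)).card ≤ c t)
    -- g is feasible
    (hg_win : ∀ i t, g i = some t → a i ≤ t ∧ t ≤ d i)
    (hg_cap : ∀ t, (Finset.univ.filter (fun i => g i = some t)).card ≤ c t)
    -- g is greedy
    (hg_greedy : ∀ i, g i = none → ∀ t, a i ≤ t → t ≤ d i →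
      (Finset.univ.filter (fun j => g j = some t)).card = c t ∧
      ∀ j, g j = some t → w i ≤ w j) :
    ∑ i ∈ Finset.univ.filter (fun i => σ i ≠ none), w i ≤
      2 * ∑ j ∈ Finset.univ.filter (fun j => g j ≠ none), w j := by
  classical
  set G := Finset.univ.filter (fun j => g j ≠ none) with hGdef
  set S := Finset.univ.filter (fun i => σ i ≠ none) with hSdef
  have hGnn : 0 ≤ ∑ j ∈ G, w j := Finset.sum_nonneg (fun j _ => hw j)
  -- split S
  have hsplit : ∑ i ∈ S, w i =
      ∑ i ∈ S.filter (fun i => g i ≠ none), w i +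
      ∑ i ∈ S.filter (fun i => ¬ g i ≠ none), w i :=
    (Finset.sum_filter_add_sum_filter_not S _ w).symm
  have h1 : ∑ i ∈ S.filter (fun i => g i ≠ none), w i ≤ ∑ j ∈ G, w j := by
    apply Finset.sum_le_sum_of_subset_of_nonneg
    · intro i hi
      simp only [hGdef, hSdef, Finset.mem_filter, Finset.mem_univ, true_and] at hi ⊢
      exact hi.2
    · intros; exact hw _
  set S₂ := S.filter (fun i => ¬ g i ≠ none) with hS₂def
  set T := S₂.image σ with hTdef
  have hfib : ∑ i ∈ S₂, w i = ∑ o ∈ T, ∑ i ∈ S₂.filter (fun i => σ i = o), w i :=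
    (Finset.sum_fiberwise_of_maps_to (fun x hx => Finset.mem_image_of_mem σ hx) w).symm
  have key : ∀ o ∈ T, ∑ i ∈ S₂.filter (fun i => σ i = o), w i ≤
      ∑ j ∈ Finset.univ.filter (fun j => g j = o), w j := by
    intro o ho
    obtain ⟨i₀, hi₀, hσi₀⟩ := Finset.mem_image.mp ho
    have hi₀' := hi₀
    simp only [hS₂def, hSdef, Finset.mem_filter, Finset.mem_univ, true_and,
      not_not] at hi₀'
    obtain ⟨t, ht⟩ : ∃ t, o = some t := by
      cases ho' : σ i₀ with
      | none => exact absurd ho' hi₀'.1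
      | some t => exact ⟨t, by rw [← hσi₀, ho']⟩
    subst ht
    apply sum_le_sum_of_card_le' w hw
    · -- card
      have hsub : S₂.filter (fun i => σ i = some t) ⊆
          Finset.univ.filter (fun i => σ i = some t) := by
        intro i hi
        simp only [Finset.mem_filter, Finset.mem_univ, true_and] at hi ⊢
        exact hi.2
      have h1 : (S₂.filter (fun i => σ i = some t)).card ≤ c t :=
        le_trans (Finset.card_le_card hsub) (hσ_cap t)
      have h2 := (hg_greedy i₀ hi₀'.2 t (hσ_win i₀ t (by rw [hσi₀]) ).1
        (hσ_win i₀ t (by rw [hσi₀])).2).1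
      omega
    · intro i hi j hj
      simp only [hS₂def, hSdef, Finset.mem_filter, Finset.mem_univ, true_and,
        not_not] at hi hj
      obtain ⟨⟨_, hgi⟩, hσi⟩ := hi
      exact (hg_greedy i hgi t (hσ_win i t hσi).1 (hσ_win i t hσi).2).2 j hj
  have h2 : ∑ i ∈ S₂, w i ≤ ∑ j ∈ G, w j := by
    rw [hfib]
    calc ∑ o ∈ T, ∑ i ∈ S₂.filter (fun i => σ i = o), w i
        ≤ ∑ o ∈ T, ∑ j ∈ Finset.univ.filter (fun j => g j = o), w j :=
          Finset.sum_le_sum key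
      _ = ∑ j ∈ T.biUnion (fun o => Finset.univ.filter (fun j => g j = o)), w j := by
          rw [Finset.sum_biUnion]
          intro o₁ h₁ o₂ h₂ hne
          apply Finset.disjoint_left.mpr
          intro j hj₁ hj₂
          simp only [Finset.mem_filter, Finset.mem_univ, true_and] at hj₁ hj₂
          exact hne (hj₁ ▸ hj₂ ▸ rfl)
      _ ≤ ∑ j ∈ G, w j := by
          apply Finset.sum_le_sum_of_subset_of_nonneg
          · intro j hj
            obtain ⟨o, ho, hjo⟩ := Finset.mem_biUnion.mp hj
            simp only [Finset.mem_filter, Finset.mem_univ, true_and] at hjo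
            obtain ⟨i₀, hi₀, hσi₀⟩ := Finset.mem_image.mp ho
            simp only [hS₂def, hSdef, Finset.mem_filter, Finset.mem_univ, true_and,
              not_not] at hi₀
            simp only [hGdef, Finset.mem_filter, Finset.mem_univ, true_and, hjo,
              ← hσi₀]
            exact hi₀.1
          · intros; exact hw _
  calc ∑ i ∈ S, w i = _ + _ := hsplit
    _ ≤ ∑ j ∈ G, w j + ∑ j ∈ G, w j := add_le_add h1 h2
    _ = 2 * ∑ j ∈ G, w j := by ring
end

section
/- Let p, p̂, Q, w be real numbers with 0 < p ≤ 1, 0 ≤ p̂ ≤ 1, Q ≥ 0, and w·p ≥ Q·(1−p). Define F : ℕ → ℝ by F 0 = 0 and F (n+1) = (1−p̂)·F n + p̂·max (w·p + (1−p)·(F n − Q)) (F n). Then for every n, p · F n ≤ w·p − Q·(1−p). -/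
/-- Induction claim inside Proposition 2: for the single-request value function `F`,
`p · F n ≤ w·p − Q·(1−p)` holds for every horizon `n`. -/
theorem single_request_value_bound
    (p phat Q w : ℝ)
    (hp : 0 < p) (hp1 : p ≤ 1)
    (hphat0 : 0 ≤ phat) (hphat1 : phat ≤ 1)
    (hQ : 0 ≤ Q) (hwp : Q * (1 - p) ≤ w * p)
    (F : ℕ → ℝ) (hF0 : F 0 = 0)
    (hFrec : ∀ n, F (n + 1) =
      (1 - phat) * F n + phat * max (w * p + (1 - p) * (F n - Q)) (F n)) :
    ∀ n, p * F n ≤ w * p - Q * (1 - p) := by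
  intro n
  induction n with
  | zero =>
    rw [hF0, mul_zero]
    nlinarith
  | succ n ih =>
    rw [hFrec n]
    have hB : 0 ≤ w * p - Q * (1 - p) := by linarith
    have hmax : p * max (w * p + (1 - p) * (F n - Q)) (F n)
        ≤ w * p - Q * (1 - p) := by
      rcases max_cases (w * p + (1 - p) * (F n - Q)) (F n) with ⟨h, _⟩ | ⟨h, _⟩
      · rw [h]; nlinarith
      · rw [h]; exact ih
    nlinarith [mul_le_mul_of_nonneg_left ih (by linarith : (0:ℝ) ≤ 1 - phat),
      mul_le_mul_of_nonneg_left hmax hphat0]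
end

section
/- Let p, p̂, Q, w be real numbers with 0 < p ≤ 1, 0 ≤ p̂ ≤ 1, Q ≥ 0, and w·p ≥ Q·(1−p). Define F : ℕ → ℝ by F 0 = 0 and F (n+1) = (1−p̂)·F n + p̂·max (w·p + (1−p)·(F n − Q)) (F n). Then for every n, F n ≤ w·p + (1−p)·(F n − Q); that is, the scheduling branch always achieves the maximum in the recursion. -/
/-- 'Schedule whenever possible' conclusion of Proposition 2: the scheduling branch
always achieves the maximum in the recursion for `F`. -/
theorem schedule_branch_optimal
    (p phat Q w : ℝ)
    (hp : 0 < p) (hp1 : p ≤ 1)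
    (hphat0 : 0 ≤ phat) (hphat1 : phat ≤ 1)
    (hQ : 0 ≤ Q) (hwp : Q * (1 - p) ≤ w * p)
    (F : ℕ → ℝ) (hF0 : F 0 = 0)
    (hFrec : ∀ n, F (n + 1) =
      (1 - phat) * F n + phat * max (w * p + (1 - p) * (F n - Q)) (F n)) :
    ∀ n, F n ≤ w * p + (1 - p) * (F n - Q) := by
  have key : ∀ n, p * F n ≤ w * p - (1 - p) * Q := by
    intro n; induction n with
    | zero => rw [hF0]; nlinarith
    | succ n ih =>
      have hmax : max (w * p + (1 - p) * (F n - Q)) (F n)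
          = w * p + (1 - p) * (F n - Q) := by
        apply max_eq_left; nlinarith
      rw [hFrec n, hmax]
      nlinarith [mul_nonneg (by linarith : (0:ℝ) ≤ 1 - phat)
          (by linarith : (0:ℝ) ≤ w * p - (1 - p) * Q - p * F n),
        mul_nonneg (mul_nonneg hphat0 (by linarith : (0:ℝ) ≤ 1 - p))
          (by linarith : (0:ℝ) ≤ w * p - (1 - p) * Q - p * F n)]
  intro n; have := key n; nlinarith
end
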